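/- For every integer N ≥ 1 and all a = (a₁,a₂), b = (b₁,b₂) ∈ ℤ², the commutator satisfies [T_a, T_b] = T_a T_b − T_b T_a = (N/π) · sin(π(a₂b₁ − a₁b₂)/N) · T_{a+b}; in particular the structure constants of this basis are C(a,b) = (N/π)·sin(π(a₂b₁ − a₁b₂)/N). -/

import Mathlib

open Complex
open Matrix

noncomputable section

/-- `e_N(x) = exp(2πi x / N)`. -/
def eN (N : ℕ) (x : ℂ) : ℂ := Complex.exp (2 * (Real.pi : ℂ) * I * x / N)

/-- The diagonal matrix `Q = diag(e_N(1), …, e_N(N))`. -/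
def Qmat (N : ℕ) : Matrix (Fin N) (Fin N) ℂ :=
  Matrix.diagonal fun j => eN N ((j : ℕ) + 1)

/-- The cyclic shift matrix `Λ`, with `Λ_{j,k} = 1` iff `k ≡ j + 1 (mod N)`. -/
def Lmat (N : ℕ) : Matrix (Fin N) (Fin N) ℂ :=
  Matrix.of fun j k => if (k : ℕ) = ((j : ℕ) + 1) % N then 1 else 0

/-- `T_a = (N/(2πi)) · exp(πi a₁ a₂ / N) · Q^{a₁} Λ^{a₂}`, powers taken as integer powers
(`zpow` of nonsingular matrices, i.e. powers in `GL(N,ℂ)`). -/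
def Tmat (N : ℕ) (a : ℤ × ℤ) : Matrix (Fin N) (Fin N) ℂ :=
  (((N : ℂ) / (2 * (Real.pi : ℂ) * I)) *
      Complex.exp ((Real.pi : ℂ) * I * ((a.1 * a.2 : ℤ) : ℂ) / N)) •
    (Qmat N ^ a.1 * Lmat N ^ a.2)

namespace TmatAux

lemma helper {G : Type*} [Group G] (x y w : G) (hc : Commute w y)
    (hxy : x * y * x⁻¹ = w * y) (m : ℤ) : x * y ^ m * x⁻¹ = w ^ m * y ^ m := by
  have h1 : x * y ^ m * x⁻¹ = (x * y * x⁻¹) ^ m := by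
    have := map_zpow (MulAut.conj x) y m
    simpa [MulAut.conj_apply] using this.symm
  rw [h1, hxy, hc.mul_zpow]

lemma grp_key {G : Type*} [Group G] (q l z : G) (hzq : Commute z q) (hzl : Commute z l)
    (h : l * q = z * (q * l)) (m n : ℤ) :
    l ^ m * q ^ n = z ^ (n * m) * (q ^ n * l ^ m) := by
  have h1 : l * q * l⁻¹ = z * q := by
    rw [h]; group
  have h2 : l * q ^ n * l⁻¹ = z ^ n * q ^ n := helper l q z hzq h1 n
  have h3 : (q ^ n)⁻¹ * l * ((q ^ n)⁻¹)⁻¹ = z ^ n * l := by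
    rw [inv_inv]
    have hlq : l * q ^ n = z ^ n * q ^ n * l := by
      calc l * q ^ n = (l * q ^ n * l⁻¹) * l := by group
        _ = z ^ n * q ^ n * l := by rw [h2]
    calc (q ^ n)⁻¹ * l * q ^ n = (q ^ n)⁻¹ * (l * q ^ n) := by group
      _ = (q ^ n)⁻¹ * (z ^ n * q ^ n * l) := by rw [hlq]
      _ = (q ^ n)⁻¹ * (q ^ n * z ^ n * l) := by
            rw [(hzq.zpow_zpow n n).eq]
      _ = z ^ n * l := by group
  have h4 : (q ^ n)⁻¹ * l ^ m * ((q ^ n)⁻¹)⁻¹ = (z ^ n) ^ m * l ^ m :=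
    helper (q ^ n)⁻¹ l (z ^ n) (hzl.zpow_left n) h3 m
  rw [inv_inv] at h4
  have h5 : l ^ m * q ^ n = q ^ n * ((z ^ n) ^ m * l ^ m) := by
    calc l ^ m * q ^ n = q ^ n * ((q ^ n)⁻¹ * l ^ m * q ^ n) := by group
      _ = q ^ n * ((z ^ n) ^ m * l ^ m) := by rw [h4]
  rw [h5, ← _root_.zpow_mul, ← mul_assoc, ((hzq.zpow_zpow (n * m) n).symm).eq, mul_assoc]

lemma eN_add (N : ℕ) (x y : ℂ) : eN N x * eN N y = eN N (x + y) := by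
  rw [eN, eN, eN, ← Complex.exp_add]
  congr 1
  rw [← add_div]; ring

lemma eN_ne_zero (N : ℕ) (x : ℂ) : eN N x ≠ 0 := Complex.exp_ne_zero _

lemma eN_nat_mod (N : ℕ) (hN : 1 ≤ N) (m : ℕ) :
    eN N ((m % N : ℕ) : ℂ) = eN N (m : ℂ) := by
  have key : ∀ q : ℕ, eN N ((N * q : ℕ) : ℂ) = 1 := by
    intro q
    rw [eN]
    have hNne : (N : ℂ) ≠ 0 := Nat.cast_ne_zero.mpr (by omega)
    have h2 : 2 * (Real.pi : ℂ) * I * ((N * q : ℕ) : ℂ) / N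
        = ((q : ℤ) : ℂ) * (2 * Real.pi * I) := by
      push_cast
      field_simp
    rw [h2, Complex.exp_int_mul_two_pi_mul_I]
  calc eN N ((m % N : ℕ) : ℂ)
      = eN N ((m % N : ℕ) : ℂ) * eN N ((N * (m / N) : ℕ) : ℂ) := by
        rw [key (m / N), mul_one]
    _ = eN N (((m % N : ℕ) : ℂ) + ((N * (m / N) : ℕ) : ℂ)) := eN_add N _ _
    _ = eN N (m : ℂ) := by rw [← Nat.cast_add, Nat.mod_add_div]

variable {N : ℕ}

lemma fin_val_add_one [NeZero N] (j : Fin N) :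
    ((j + 1 : Fin N) : ℕ) = ((j : ℕ) + 1) % N := by
  rw [Fin.val_add, Fin.val_one' N, Nat.add_mod ((j : ℕ)) (1 % N),
    Nat.mod_mod_of_dvd 1 dvd_rfl, ← Nat.add_mod]

lemma lmat_apply [NeZero N] (j k : Fin N) :
    Lmat N j k = if k = j + 1 then 1 else 0 := by
  have h : ((k : ℕ) = ((j : ℕ) + 1) % N) ↔ k = j + 1 := by
    rw [← fin_val_add_one]
    exact Fin.val_eq_val k (j + 1)
  simp only [Lmat, Matrix.of_apply, h]

lemma lmat_mul_transpose [NeZero N] : Lmat N * (Lmat N)ᵀ = 1 := by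
  ext j k
  simp only [Matrix.mul_apply, Matrix.transpose_apply, lmat_apply, Matrix.one_apply,
    ite_mul, one_mul, zero_mul]
  rw [Finset.sum_ite_eq' Finset.univ (j + 1) (fun l => if l = k + 1 then 1 else 0)]
  simp only [Finset.mem_univ, if_true]
  simp [add_left_inj, eq_comm]

lemma qmat_mul_inv :
    Qmat N * Matrix.diagonal (fun j : Fin N => (eN N ((j : ℕ) + 1))⁻¹) = 1 := by
  rw [Qmat, Matrix.diagonal_mul_diagonal]
  rw [show (fun j : Fin N => eN N ((j : ℕ) + 1) * (eN N ((j : ℕ) + 1))⁻¹) = fun _ => (1 : ℂ) from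
    funext fun j => mul_inv_cancel₀ (eN_ne_zero N _)]
  exact Matrix.diagonal_one

lemma lmat_mul_qmat [NeZero N] (hN : 1 ≤ N) :
    Lmat N * Qmat N = eN N 1 • (Qmat N * Lmat N) := by
  ext j k
  rw [Qmat, Matrix.mul_diagonal, Matrix.smul_apply, Matrix.diagonal_mul, lmat_apply]
  by_cases h : k = j + 1
  · subst h
    rw [if_pos rfl, one_mul, mul_one, smul_eq_mul, fin_val_add_one]
    have h2 : eN N (((((j : ℕ) + 1) % N : ℕ)) : ℂ) = eN N (((j : ℕ) : ℂ) + 1) := by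
      rw [eN_nat_mod N hN]; push_cast; ring_nf
    rw [← eN_add, h2, mul_comm]
  · simp [h]

end TmatAux

open TmatAux in
/-- Main theorem. -/
theorem Tmat_commutator (N : ℕ) (hN : 1 ≤ N) (a b : ℤ × ℤ) :
    Tmat N a * Tmat N b - Tmat N b * Tmat N a =
      (((N : ℂ) / (Real.pi : ℂ)) *
          Complex.sin ((Real.pi : ℂ) * ((a.2 * b.1 - a.1 * b.2 : ℤ) : ℂ) / N)) •
        Tmat N (a + b) := by
  haveI : NeZero N := ⟨by omega⟩
  obtain ⟨a1, a2⟩ := a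
  obtain ⟨b1, b2⟩ := b
  set M := Matrix (Fin N) (Fin N) ℂ
  -- units
  have hQ : Qmat N * Matrix.diagonal (fun j : Fin N => (eN N ((j : ℕ) + 1))⁻¹) = 1 :=
    qmat_mul_inv
  have hL : Lmat N * (Lmat N)ᵀ = 1 := lmat_mul_transpose
  set QU : Mˣ := ⟨Qmat N, _, hQ, mul_eq_one_comm.mp hQ⟩ with hQU
  set LU : Mˣ := ⟨Lmat N, _, hL, mul_eq_one_comm.mp hL⟩ with hLU
  set φ : ℂ →* M := (algebraMap ℂ M : ℂ →+* M).toMonoidHom with hφ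
  set ωU : ℂˣ := Units.mk0 (eN N 1) (eN_ne_zero N 1) with hωU
  set zU : Mˣ := Units.map φ ωU with hzU
  have hφval : ∀ c : ℂ, φ c = c • (1 : M) := fun c => Algebra.algebraMap_eq_smul_one c
  have hz : ∀ k : ℤ, ((zU ^ k : Mˣ) : M) = (eN N 1) ^ k • (1 : M) := by
    intro k
    rw [hzU, ← map_zpow (Units.map φ) ωU k, Units.coe_map]
    show φ ((ωU ^ k : ℂˣ) : ℂ) = _
    rw [Units.val_zpow_eq_zpow_val, hφval]
    rw [hωU, Units.val_mk0]
  have hzval : ((zU : Mˣ) : M) = eN N 1 • (1 : M) := by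
    have := hz 1
    simpa using this
  have hzq : Commute zU QU := by
    apply Units.ext
    show (zU : M) * (QU : M) = (QU : M) * (zU : M)
    rw [hzval, smul_mul_assoc, one_mul, mul_smul_comm, mul_one]
  have hzl : Commute zU LU := by
    apply Units.ext
    show (zU : M) * (LU : M) = (LU : M) * (zU : M)
    rw [hzval, smul_mul_assoc, one_mul, mul_smul_comm, mul_one]
  have hrel : LU * QU = zU * (QU * LU) := by
    apply Units.ext
    show (LU : M) * (QU : M) = (zU : M) * ((QU : M) * (LU : M))
    rw [hzval, smul_mul_assoc, one_mul]
    exact lmat_mul_qmat hN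
  -- swap lemma on matrices
  have hswap : ∀ m n : ℤ, Lmat N ^ m * Qmat N ^ n
      = (eN N 1) ^ (n * m) • (Qmat N ^ n * Lmat N ^ m) := by
    intro m n
    have := congrArg (Units.val) (grp_key QU LU zU hzq hzl hrel m n)
    rw [Units.val_mul, Units.val_mul, Units.val_mul, hz (n * m),
      Matrix.coe_units_zpow QU n, Matrix.coe_units_zpow LU m] at this
    rw [show ((QU : Mˣ) : M) = Qmat N from rfl, show ((LU : Mˣ) : M) = Lmat N from rfl] at this
    rw [this, smul_mul_assoc, one_mul]
  have hQadd : ∀ m n : ℤ, Qmat N ^ m * Qmat N ^ n = Qmat N ^ (m + n) := by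
    intro m n
    rw [← Matrix.coe_units_zpow QU, ← Matrix.coe_units_zpow QU, ← Units.val_mul,
      ← _root_.zpow_add, Matrix.coe_units_zpow]
  have hLadd : ∀ m n : ℤ, Lmat N ^ m * Lmat N ^ n = Lmat N ^ (m + n) := by
    intro m n
    rw [← Matrix.coe_units_zpow LU, ← Matrix.coe_units_zpow LU, ← Units.val_mul,
      ← _root_.zpow_add, Matrix.coe_units_zpow]
  -- product of basis matrices
  have hprod : ∀ (a1 a2 b1 b2 : ℤ),
      (Qmat N ^ a1 * Lmat N ^ a2) * (Qmat N ^ b1 * Lmat N ^ b2)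
      = (eN N 1) ^ (b1 * a2) • (Qmat N ^ (a1 + b1) * Lmat N ^ (a2 + b2)) := by
    intro a1 a2 b1 b2
    calc (Qmat N ^ a1 * Lmat N ^ a2) * (Qmat N ^ b1 * Lmat N ^ b2)
        = Qmat N ^ a1 * ((Lmat N ^ a2 * Qmat N ^ b1) * Lmat N ^ b2) := by
          simp only [mul_assoc]
      _ = Qmat N ^ a1 * (((eN N 1) ^ (b1 * a2) • (Qmat N ^ b1 * Lmat N ^ a2)) * Lmat N ^ b2) := by
          rw [hswap a2 b1]
      _ = (eN N 1) ^ (b1 * a2) • (Qmat N ^ a1 * (Qmat N ^ b1 * (Lmat N ^ a2 * Lmat N ^ b2))) := by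
          rw [smul_mul_assoc, mul_smul_comm]
          simp only [mul_assoc]
      _ = (eN N 1) ^ (b1 * a2) • (Qmat N ^ (a1 + b1) * Lmat N ^ (a2 + b2)) := by
          rw [← mul_assoc, hQadd, hLadd]
  -- reduce to a scalar identity
  simp only [Tmat, Prod.mk_add_mk]
  rw [smul_mul_smul_comm, smul_mul_smul_comm, hprod a1 a2 b1 b2, hprod b1 b2 a1 a2,
    smul_smul, smul_smul]
  rw [show b1 + a1 = a1 + b1 from add_comm b1 a1, show b2 + a2 = a2 + b2 from add_comm b2 a2]
  rw [← sub_smul, smul_smul]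
  congr 1
  -- the scalar identity
  have hNne : (N : ℂ) ≠ 0 := Nat.cast_ne_zero.mpr (by omega)
  have hπ : (Real.pi : ℂ) ≠ 0 := Complex.ofReal_ne_zero.mpr Real.pi_ne_zero
  set t : ℂ := (Real.pi : ℂ) * I / N with ht
  have hpow : ∀ k : ℤ, (eN N 1) ^ k = Complex.exp (t * (2 * (k : ℂ))) := by
    intro k
    rw [eN, ← Complex.exp_int_mul]
    congr 1
    rw [ht]; field_simp
  have hexp : ∀ m : ℤ, Complex.exp ((Real.pi : ℂ) * I * ((m : ℤ) : ℂ) / N)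
      = Complex.exp (t * ((m : ℤ) : ℂ)) := by
    intro m; congr 1; rw [ht]; ring
  rw [hpow (b1 * a2), hpow (a1 * b2), hexp (a1 * a2), hexp (b1 * b2), hexp ((a1 + b1) * (a2 + b2))]
  set K : ℂ := (N : ℂ) / (2 * (Real.pi : ℂ) * I) with hK
  have collect : ∀ x y z : ℂ,
      K * Complex.exp (t * x) * (K * Complex.exp (t * y)) * Complex.exp (t * z)
      = K ^ 2 * Complex.exp (t * (x + y + z)) := by
    intro x y z
    rw [mul_add, mul_add, Complex.exp_add, Complex.exp_add]
    ring
  rw [collect, collect]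
  set S : ℂ := (((a1 + b1) * (a2 + b2) : ℤ) : ℂ) with hS
  set D : ℂ := ((a2 * b1 - a1 * b2 : ℤ) : ℂ) with hD
  have e1 : Complex.exp (t * (((a1 * a2 : ℤ) : ℂ) + ((b1 * b2 : ℤ) : ℂ) + 2 * ((b1 * a2 : ℤ) : ℂ)))
      = Complex.exp (t * S) * Complex.exp (t * D) := by
    rw [← Complex.exp_add, ← mul_add]
    congr 1
    rw [hS, hD]; push_cast; ring
  have e2 : Complex.exp (t * (((b1 * b2 : ℤ) : ℂ) + ((a1 * a2 : ℤ) : ℂ) + 2 * ((a1 * b2 : ℤ) : ℂ)))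
      = Complex.exp (t * S) * Complex.exp (-(t * D)) := by
    rw [← Complex.exp_add]
    congr 1
    rw [hS, hD]; push_cast; ring
  rw [e1, e2, Complex.sin]
  have harg1 : -((Real.pi : ℂ) * D / N) * I = -(t * D) := by rw [ht]; ring
  have harg2 : ((Real.pi : ℂ) * D / N) * I = t * D := by rw [ht]; ring
  rw [show (Real.pi : ℂ) * ((a2 * b1 - a1 * b2 : ℤ) : ℂ) / N = (Real.pi : ℂ) * D / N from by
    rw [hD], harg1, harg2]
  set ES : ℂ := Complex.exp (t * S)
  set ED : ℂ := Complex.exp (t * D)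
  set EDi : ℂ := Complex.exp (-(t * D))
  rw [hK]
  have hI : I ≠ 0 := Complex.I_ne_zero
  field_simp
  ring_nf
  rw [Complex.I_sq]
  ring
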